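/- Corollary 2: Suppose there exists s′ ∈ S such that for every s ∈ S the chain X–Y_s–Y_{s′} is Markov, i.e., there is a channel W_s from 𝒴 to 𝒴 with P_{XY_{s′}}(x,y′) = Σ_y P_{XY_s}(x,y)·W_s(y′|y) for all x, y′. Then the lower-bound and upper-bound expressions of Theorem 1 are equal: L(R) = M(R) for every R > 0. -/

import Mathlib

open scoped BigOperators Classical

noncomputable section

namespace CRGen

/-- A probability mass function on a finite type. -/
def IsPMF {α : Type*} [Fintype α] (p : α → ℝ) : Prop :=
  (∀ a, 0 ≤ p a) ∧ ∑ a, p a = 1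

/-- Shannon entropy to base 2 of a pmf on a finite type (`0 log 0 = 0`). -/
def entPMF {α : Type*} [Fintype α] (p : α → ℝ) : ℝ :=
  - ∑ a, p a * Real.logb 2 (p a)

/-- Distribution (pushforward pmf) of a random variable on a finite probability
space with pmf `μ`. -/
def dist {Ω α : Type*} [Fintype Ω] (μ : Ω → ℝ) (X : Ω → α) : α → ℝ :=
  fun a => ∑ ω, if X ω = a then μ ω else 0

/-- Shannon entropy (base 2) of a random variable. -/
def H {Ω α : Type*} [Fintype Ω] [Fintype α] (μ : Ω → ℝ) (X : Ω → α) : ℝ :=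
  entPMF (dist μ X)

/-- Conditional entropy `H(X|Y)`. -/
def condH {Ω α β : Type*} [Fintype Ω] [Fintype α] [Fintype β]
    (μ : Ω → ℝ) (X : Ω → α) (Y : Ω → β) : ℝ :=
  H μ (fun ω => (X ω, Y ω)) - H μ Y

/-- Mutual information `I(X;Y)`. -/
def MI {Ω α β : Type*} [Fintype Ω] [Fintype α] [Fintype β]
    (μ : Ω → ℝ) (X : Ω → α) (Y : Ω → β) : ℝ :=
  H μ X + H μ Y - H μ (fun ω => (X ω, Y ω))

/-- Conditional mutual information `I(X;Y|Z)`. -/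
def condMI {Ω α β γ : Type*} [Fintype Ω] [Fintype α] [Fintype β] [Fintype γ]
    (μ : Ω → ℝ) (X : Ω → α) (Y : Ω → β) (Z : Ω → γ) : ℝ :=
  H μ (fun ω => (X ω, Z ω)) + H μ (fun ω => (Y ω, Z ω))
    - H μ (fun ω => (X ω, (Y ω, Z ω))) - H μ Z

/-- First marginal of a joint pmf on a product. -/
def margFst {α β : Type*} [Fintype α] [Fintype β] (q : α × β → ℝ) : α → ℝ :=
  fun a => ∑ b, q (a, b)

/-- Second marginal of a joint pmf on a product. -/
def margSnd {α β : Type*} [Fintype α] [Fintype β] (q : α × β → ℝ) : β → ℝ :=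
  fun b => ∑ a, q (a, b)

/-- Mutual information of a joint pmf on a product. -/
def miPMF {α β : Type*} [Fintype α] [Fintype β] (q : α × β → ℝ) : ℝ :=
  entPMF (margFst q) + entPMF (margSnd q) - entPMF q

/-- The lower-bound expression `L(R)` of Theorem 1: the supremum of `I(U;X)` over
all finite sets `𝒰` and channels `W = P_{U|X}` from `𝒳` to `𝒰` such that for
every `s ∈ S` the triple `(U, X, Y_s)` has joint law `P_{U|X}·P_{XY_s}` and
`I(U;X) − min_{s∈S} I(U;Y_s) ≤ R`. -/
def LB {S 𝒳 𝒴 : Type} [Fintype S] [Fintype 𝒳] [Fintype 𝒴] [Nonempty S]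
    (P : S → 𝒳 × 𝒴 → ℝ) (PX : 𝒳 → ℝ) (R : ℝ) : ℝ :=
  sSup { r : ℝ | ∃ (𝒰 : Type) (_ : Fintype 𝒰) (W : 𝒳 → 𝒰 → ℝ),
    (∀ x u, 0 ≤ W x u) ∧ (∀ x, ∑ u, W x u = 1) ∧
    miPMF (fun p : 𝒰 × 𝒳 => W p.2 p.1 * PX p.2)
      - Finset.univ.inf' Finset.univ_nonempty
          (fun s : S => miPMF (fun p : 𝒰 × 𝒴 => ∑ x, W x p.1 * P s (x, p.2))) ≤ R ∧
    r = miPMF (fun p : 𝒰 × 𝒳 => W p.2 p.1 * PX p.2) }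

/-- For a single source state with joint pmf `Q` on `𝒳 × 𝒴` (with `𝒳`-marginal
`PX`): the supremum of `I(U;X)` over all finite sets `𝒰` and channels
`W = P_{U|X}` such that `(U,X,Y)` has joint law `P_{U|X}·Q` and
`I(U;X) − I(U;Y) ≤ R`. -/
def Msup {𝒳 𝒴 : Type} [Fintype 𝒳] [Fintype 𝒴]
    (Q : 𝒳 × 𝒴 → ℝ) (PX : 𝒳 → ℝ) (R : ℝ) : ℝ :=
  sSup { r : ℝ | ∃ (𝒰 : Type) (_ : Fintype 𝒰) (W : 𝒳 → 𝒰 → ℝ),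
    (∀ x u, 0 ≤ W x u) ∧ (∀ x, ∑ u, W x u = 1) ∧
    miPMF (fun p : 𝒰 × 𝒳 => W p.2 p.1 * PX p.2)
      - miPMF (fun p : 𝒰 × 𝒴 => ∑ x, W x p.1 * Q (x, p.2)) ≤ R ∧
    r = miPMF (fun p : 𝒰 × 𝒳 => W p.2 p.1 * PX p.2) }

/-- The upper-bound expression `M(R)` of Theorem 1:
`min_{s ∈ S}` of the per-state supremum. -/
def MB {S 𝒳 𝒴 : Type} [Fintype S] [Fintype 𝒳] [Fintype 𝒴] [Nonempty S]
    (P : S → 𝒳 × 𝒴 → ℝ) (PX : 𝒳 → ℝ) (R : ℝ) : ℝ :=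
  Finset.univ.inf' Finset.univ_nonempty fun s : S => Msup (P s) PX R

/-! ### Auxiliary lemmas -/

lemma convexOn_mul_logb : ConvexOn ℝ (Set.Ici (0:ℝ)) (fun x : ℝ => x * Real.logb 2 x) := by
  have h := (Real.convexOn_mul_log).smul (c := (Real.log 2)⁻¹) (by positivity)
  rw [show (fun x : ℝ => x * Real.logb 2 x) = fun x => (Real.log 2)⁻¹ • (x * Real.log x) from ?_]
  · exact h
  funext x
  simp only [smul_eq_mul, Real.logb, div_eq_inv_mul]
  ring

/-- The log-sum inequality (base 2), with the convention `0·logb(0/b)=0`. -/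
lemma logSum {ι : Type*} [Fintype ι] (a b : ι → ℝ) (ha : ∀ i, 0 ≤ a i) (hb : ∀ i, 0 ≤ b i)
    (hab : ∀ i, b i = 0 → a i = 0) :
    (∑ i, a i) * Real.logb 2 ((∑ i, a i) / (∑ i, b i))
      ≤ ∑ i, a i * Real.logb 2 (a i / b i) := by
  set A := ∑ i, a i with hA
  set B := ∑ i, b i with hB
  rcases eq_or_lt_of_le (Finset.sum_nonneg (fun i _ => hb i)) with h0 | hBpos
  · -- B = 0 : everything is 0
    have hb0 : ∀ i, b i = 0 := by
      intro i
      have := (Finset.sum_eq_zero_iff_of_nonneg (fun i _ => hb i)).1 h0.symm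
      exact this i (Finset.mem_univ i)
    have ha0 : ∀ i, a i = 0 := fun i => hab i (hb0 i)
    have hA0 : A = 0 := by rw [hA]; exact Finset.sum_eq_zero fun i _ => ha0 i
    rw [hA0]
    simp [ha0]
  · -- B > 0 : Jensen for x ↦ x logb x
    have hjen := convexOn_mul_logb.map_sum_le (t := Finset.univ)
      (w := fun i => b i / B) (p := fun i => a i / b i)
      (fun i _ => div_nonneg (hb i) hBpos.le)
      (by rw [← Finset.sum_div, ← hB, div_self (ne_of_gt hBpos)])
      (fun i _ => Set.mem_Ici.2 (div_nonneg (ha i) (hb i)))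
    have hsum1 : ∑ i, (b i / B) • (a i / b i) = A / B := by
      rw [hA, Finset.sum_div]
      refine Finset.sum_congr rfl fun i _ => ?_
      rcases eq_or_lt_of_le (hb i) with h | h
      · simp [hab i h.symm, ← h]
      · rw [smul_eq_mul]
        field_simp
    have hsum2 : ∑ i, (b i / B) • ((a i / b i) * Real.logb 2 (a i / b i))
        = (∑ i, a i * Real.logb 2 (a i / b i)) / B := by
      rw [Finset.sum_div]
      refine Finset.sum_congr rfl fun i _ => ?_
      rcases eq_or_lt_of_le (hb i) with h | h
      · simp [hab i h.symm, ← h]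
      · rw [smul_eq_mul]
        field_simp
    rw [hsum1] at hjen
    simp only [smul_eq_mul] at hjen hsum2
    rw [hsum2] at hjen
    have := mul_le_mul_of_nonneg_left hjen hBpos.le
    have hB0 : B ≠ 0 := hBpos.ne'
    calc A * Real.logb 2 (A / B) = B * (A / B * Real.logb 2 (A / B)) := by
          field_simp
      _ ≤ B * ((∑ i, a i * Real.logb 2 (a i / b i)) / B) := this
      _ = ∑ i, a i * Real.logb 2 (a i / b i) := by field_simp

lemma le_margFst {α β : Type*} [Fintype α] [Fintype β] (q : α × β → ℝ)
    (hq : ∀ p, 0 ≤ q p) (a : α) (b : β) : q (a, b) ≤ margFst q a :=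
  Finset.single_le_sum (fun i _ => hq (a, i)) (Finset.mem_univ b)

lemma le_margSnd {α β : Type*} [Fintype α] [Fintype β] (q : α × β → ℝ)
    (hq : ∀ p, 0 ≤ q p) (a : α) (b : β) : q (a, b) ≤ margSnd q b :=
  Finset.single_le_sum (fun i _ => hq (i, b)) (Finset.mem_univ a)

lemma margFst_nonneg {α β : Type*} [Fintype α] [Fintype β] (q : α × β → ℝ)
    (hq : ∀ p, 0 ≤ q p) (a : α) : 0 ≤ margFst q a :=
  Finset.sum_nonneg fun b _ => hq (a, b)

lemma margSnd_nonneg {α β : Type*} [Fintype α] [Fintype β] (q : α × β → ℝ)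
    (hq : ∀ p, 0 ≤ q p) (b : β) : 0 ≤ margSnd q b :=
  Finset.sum_nonneg fun a _ => hq (a, b)

lemma sum_margFst_mul {α β : Type*} [Fintype α] [Fintype β] (q : α × β → ℝ) (g : α → ℝ) :
    ∑ a, margFst q a * g a = ∑ p : α × β, q p * g p.1 := by
  rw [Fintype.sum_prod_type]
  exact Finset.sum_congr rfl fun a _ => by rw [margFst, Finset.sum_mul]

lemma sum_margSnd_mul {α β : Type*} [Fintype α] [Fintype β] (q : α × β → ℝ) (g : β → ℝ) :
    ∑ b, margSnd q b * g b = ∑ p : α × β, q p * g p.2 := by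
  rw [Fintype.sum_prod_type_right]
  exact Finset.sum_congr rfl fun b _ => by rw [margSnd, Finset.sum_mul]

/-- `miPMF` as a relative-entropy-like sum. -/
lemma miPMF_eq_sum {α β : Type*} [Fintype α] [Fintype β] (q : α × β → ℝ)
    (hq : ∀ p, 0 ≤ q p) :
    miPMF q = ∑ p : α × β, q p * Real.logb 2 (q p / (margFst q p.1 * margSnd q p.2)) := by
  have hterm : ∀ p : α × β,
      q p * Real.logb 2 (q p / (margFst q p.1 * margSnd q p.2))
        = q p * Real.logb 2 (q p) - q p * Real.logb 2 (margFst q p.1)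
            - q p * Real.logb 2 (margSnd q p.2) := by
    intro p
    rcases eq_or_lt_of_le (hq p) with h | h
    · simp [← h]
    · have hU : 0 < margFst q p.1 := lt_of_lt_of_le h (le_margFst q hq p.1 p.2)
      have hY : 0 < margSnd q p.2 := lt_of_lt_of_le h (le_margSnd q hq p.1 p.2)
      rw [Real.logb_div (ne_of_gt h) (ne_of_gt (mul_pos hU hY)),
        Real.logb_mul (ne_of_gt hU) (ne_of_gt hY)]
      ring
  unfold miPMF entPMF
  rw [sum_margFst_mul q (fun a => Real.logb 2 (margFst q a)),
    sum_margSnd_mul q (fun b => Real.logb 2 (margSnd q b))]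
  rw [Finset.sum_congr rfl (fun p _ => hterm p), Finset.sum_sub_distrib,
    Finset.sum_sub_distrib]
  ring

/-- `H(U) ≤ H(U,X)` : entropy of a marginal is at most entropy of the joint. -/
lemma entPMF_margFst_le {α β : Type*} [Fintype α] [Fintype β] (q : α × β → ℝ)
    (hq : ∀ p, 0 ≤ q p) : entPMF (margFst q) ≤ entPMF q := by
  unfold entPMF
  rw [neg_le_neg_iff, sum_margFst_mul q (fun a => Real.logb 2 (margFst q a))]
  refine Finset.sum_le_sum fun p _ => ?_
  rcases eq_or_lt_of_le (hq p) with h | h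
  · simp [← h]
  · exact mul_le_mul_of_nonneg_left
      (Real.logb_le_logb_of_le one_lt_two h (le_margFst q hq p.1 p.2)) (hq p)

/-- `I(U;X) ≤ H(X)`. -/
lemma miPMF_le_entPMF_margSnd {α β : Type*} [Fintype α] [Fintype β] (q : α × β → ℝ)
    (hq : ∀ p, 0 ≤ q p) : miPMF q ≤ entPMF (margSnd q) := by
  have := entPMF_margFst_le q hq
  unfold miPMF
  linarith

/-- Data-processing inequality: pushing the second coordinate through a channel
does not increase mutual information. -/
lemma miPMF_channel_le {𝒰 𝒴 : Type*} [Fintype 𝒰] [Fintype 𝒴]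
    (q : 𝒰 × 𝒴 → ℝ) (hq : ∀ p, 0 ≤ q p)
    (K : 𝒴 → 𝒴 → ℝ) (hK : ∀ y y', 0 ≤ K y y') (hK1 : ∀ y, ∑ y', K y y' = 1) :
    miPMF (fun p : 𝒰 × 𝒴 => ∑ y, q (p.1, y) * K y p.2) ≤ miPMF q := by
  set q' : 𝒰 × 𝒴 → ℝ := fun p => ∑ y, q (p.1, y) * K y p.2 with hq'def
  have hq' : ∀ p, 0 ≤ q' p := fun p =>
    Finset.sum_nonneg fun y _ => mul_nonneg (hq _) (hK _ _)
  have hFst : ∀ u, margFst q' u = margFst q u := by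
    intro u
    calc margFst q' u = ∑ y', ∑ y, q (u, y) * K y y' :=
          Finset.sum_congr rfl fun y' _ => rfl
      _ = ∑ y, ∑ y', q (u, y) * K y y' := Finset.sum_comm
      _ = ∑ y, q (u, y) := by
          refine Finset.sum_congr rfl fun y _ => ?_
          rw [← Finset.mul_sum, hK1, mul_one]
      _ = margFst q u := rfl
  have hSnd : ∀ y', margSnd q' y' = ∑ y, margSnd q y * K y y' := by
    intro y'
    calc margSnd q' y' = ∑ u, ∑ y, q (u, y) * K y y' :=
          Finset.sum_congr rfl fun u _ => rfl
      _ = ∑ y, ∑ u, q (u, y) * K y y' := Finset.sum_comm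
      _ = ∑ y, margSnd q y * K y y' :=
          Finset.sum_congr rfl fun y _ => by rw [margSnd, Finset.sum_mul]
  rw [miPMF_eq_sum q hq, miPMF_eq_sum q' hq', Fintype.sum_prod_type,
    Fintype.sum_prod_type]
  refine Finset.sum_le_sum fun u _ => ?_
  calc ∑ y', q' (u, y') * Real.logb 2 (q' (u, y') / (margFst q' u * margSnd q' y'))
      ≤ ∑ y', ∑ y, K y y' *
          (q (u, y) * Real.logb 2 (q (u, y) / (margFst q u * margSnd q y))) := by
        refine Finset.sum_le_sum fun y' _ => ?_
        have hls := logSum (fun y => q (u, y) * K y y')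
          (fun y => margFst q u * margSnd q y * K y y')
          (fun y => mul_nonneg (hq _) (hK _ _))
          (fun y => mul_nonneg
            (mul_nonneg (margFst_nonneg q hq u) (margSnd_nonneg q hq y)) (hK _ _))
          (fun y hy => by
            rcases mul_eq_zero.1 hy with h | h
            · rcases mul_eq_zero.1 h with h' | h'
              · have h1 := le_margFst q hq u y
                have h2 : q (u, y) = 0 := le_antisymm (h' ▸ h1) (hq _)
                show q (u, y) * K y y' = 0
                rw [h2, zero_mul]
              · have h1 := le_margSnd q hq u y
                have h2 : q (u, y) = 0 := le_antisymm (h' ▸ h1) (hq _)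
                show q (u, y) * K y y' = 0
                rw [h2, zero_mul]
            · show q (u, y) * K y y' = 0
              rw [h, mul_zero])
        have hsa : ∑ y, q (u, y) * K y y' = q' (u, y') := rfl
        have hsb : ∑ y, margFst q u * margSnd q y * K y y'
            = margFst q' u * margSnd q' y' := by
          rw [hFst, hSnd, Finset.mul_sum]
          exact Finset.sum_congr rfl fun y _ => by ring
        rw [hsa, hsb] at hls
        refine hls.trans (le_of_eq (Finset.sum_congr rfl fun y _ => ?_))
        rcases eq_or_lt_of_le (hK y y') with h | h
        · simp [← h]
        · rw [mul_div_mul_right _ _ (ne_of_gt h)]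
          ring
    _ = ∑ y, q (u, y) * Real.logb 2 (q (u, y) / (margFst q u * margSnd q y)) := by
        rw [Finset.sum_comm]
        refine Finset.sum_congr rfl fun y _ => ?_
        rw [← Finset.sum_mul, hK1, one_mul]

/-- Mutual information with a trivial (one-point) first coordinate is zero. -/
lemma miPMF_punit {γ : Type*} [Fintype γ] (f : γ → ℝ) (hf : ∑ c, f c = 1) :
    miPMF (fun p : PUnit × γ => f p.2) = 0 := by
  have h1 : entPMF (margFst (fun p : PUnit × γ => f p.2)) = 0 := by
    unfold entPMF margFst
    simp [hf]
  have h2 : margSnd (fun p : PUnit × γ => f p.2) = f := by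
    funext c
    simp [margSnd]
  have h3 : entPMF (fun p : PUnit × γ => f p.2) = entPMF f := by
    unfold entPMF
    rw [Fintype.sum_prod_type]
    simp
  unfold miPMF
  rw [h1, h2, h3]
  ring

set_option maxHeartbeats 1000000 in
/-- Corollary 2: if there is `s' ∈ S` such that for every `s ∈ S` the chain
`X – Y_s – Y_{s'}` is Markov (i.e. `P_{XY_{s'}}` is obtained from `P_{XY_s}` by a
channel `W_s` acting on the `𝒴`-component), then the lower- and upper-bound
expressions of Theorem 1 are equal for every `R > 0`. -/
theorem corollary2_degraded_bounds_equal
    {S 𝒳 𝒴 : Type} [Fintype S] [Fintype 𝒳] [Fintype 𝒴] [Nonempty S]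
    (P : S → 𝒳 × 𝒴 → ℝ) (PX : 𝒳 → ℝ)
    (hP : ∀ s, IsPMF (P s)) (hPX : IsPMF PX)
    (hmarg : ∀ s x, ∑ y, P s (x, y) = PX x)
    (s' : S)
    (hdeg : ∀ s : S, ∃ W : 𝒴 → 𝒴 → ℝ,
      (∀ y y', 0 ≤ W y y') ∧ (∀ y, ∑ y', W y y' = 1) ∧
      ∀ x y', P s' (x, y') = ∑ y, P s (x, y) * W y y') :
    ∀ R : ℝ, 0 < R → LB P PX R = MB P PX R := by
  intro R hR
  classical
  -- Data-processing: for every channel `W`, the `s'`-information is smallest.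
  have key : ∀ (𝒰 : Type) (i : Fintype 𝒰) (W : 𝒳 → 𝒰 → ℝ), (∀ x u, 0 ≤ W x u) → ∀ s : S,
      miPMF (fun p : 𝒰 × 𝒴 => ∑ x, W x p.1 * P s' (x, p.2))
        ≤ miPMF (fun p : 𝒰 × 𝒴 => ∑ x, W x p.1 * P s (x, p.2)) := by
    intro 𝒰 i W hW s
    obtain ⟨K, hK0, hK1, hKeq⟩ := hdeg s
    have hrw : (fun p : 𝒰 × 𝒴 => ∑ x, W x p.1 * P s' (x, p.2))
        = fun p : 𝒰 × 𝒴 => ∑ y,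
            (fun p' : 𝒰 × 𝒴 => ∑ x, W x p'.1 * P s (x, p'.2)) (p.1, y) * K y p.2 := by
      funext p
      calc ∑ x, W x p.1 * P s' (x, p.2)
          = ∑ x, ∑ y, W x p.1 * (P s (x, y) * K y p.2) := by
            refine Finset.sum_congr rfl fun x _ => ?_
            rw [hKeq x p.2, Finset.mul_sum]
        _ = ∑ y, (∑ x, W x p.1 * P s (x, y)) * K y p.2 := by
            rw [Finset.sum_comm]
            refine Finset.sum_congr rfl fun y _ => ?_
            rw [Finset.sum_mul]
            exact Finset.sum_congr rfl fun x _ => by ring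
    rw [hrw]
    exact miPMF_channel_le (fun p : 𝒰 × 𝒴 => ∑ x, W x p.1 * P s (x, p.2))
      (fun p => Finset.sum_nonneg fun x _ => mul_nonneg (hW x p.1) ((hP s).1 _))
      K hK0 hK1
  have hfix : ∀ (𝒰 : Type) (i : Fintype 𝒰) (W : 𝒳 → 𝒰 → ℝ), (∀ x u, 0 ≤ W x u) →
      Finset.univ.inf' Finset.univ_nonempty
          (fun s : S => miPMF (fun p : 𝒰 × 𝒴 => ∑ x, W x p.1 * P s (x, p.2)))
        = miPMF (fun p : 𝒰 × 𝒴 => ∑ x, W x p.1 * P s' (x, p.2)) := by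
    intro 𝒰 i W hW
    refine le_antisymm (Finset.inf'_le _ (Finset.mem_univ s')) ?_
    exact Finset.le_inf' _ _ fun s _ => key 𝒰 i W hW s
  have hsets : LB P PX R = Msup (P s') PX R := by
    unfold LB Msup
    congr 1
    ext r
    constructor
    · rintro ⟨𝒰, i, W, h0, h1, hcon, hr⟩
      exact ⟨𝒰, i, W, h0, h1, by rw [← hfix 𝒰 i W h0]; exact hcon, hr⟩
    · rintro ⟨𝒰, i, W, h0, h1, hcon, hr⟩
      exact ⟨𝒰, i, W, h0, h1, by rw [hfix 𝒰 i W h0]; exact hcon, hr⟩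
  have hbdd : ∀ Q : 𝒳 × 𝒴 → ℝ, BddAbove { r : ℝ |
      ∃ (𝒰 : Type) (_ : Fintype 𝒰) (W : 𝒳 → 𝒰 → ℝ),
      (∀ x u, 0 ≤ W x u) ∧ (∀ x, ∑ u, W x u = 1) ∧
      miPMF (fun p : 𝒰 × 𝒳 => W p.2 p.1 * PX p.2)
        - miPMF (fun p : 𝒰 × 𝒴 => ∑ x, W x p.1 * Q (x, p.2)) ≤ R ∧
      r = miPMF (fun p : 𝒰 × 𝒳 => W p.2 p.1 * PX p.2) } := by
    intro Q
    refine ⟨entPMF PX, ?_⟩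
    rintro r ⟨𝒰, i, W, h0, h1, -, rfl⟩
    have hq : ∀ p : 𝒰 × 𝒳, 0 ≤ W p.2 p.1 * PX p.2 :=
      fun p => mul_nonneg (h0 _ _) (hPX.1 _)
    have hms : margSnd (fun p : 𝒰 × 𝒳 => W p.2 p.1 * PX p.2) = PX := by
      funext x
      show (∑ u, W x u * PX x) = PX x
      rw [← Finset.sum_mul, h1, one_mul]
    calc miPMF (fun p : 𝒰 × 𝒳 => W p.2 p.1 * PX p.2)
        ≤ entPMF (margSnd (fun p : 𝒰 × 𝒳 => W p.2 p.1 * PX p.2)) :=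
          miPMF_le_entPMF_margSnd _ hq
      _ = entPMF PX := by rw [hms]
  have hzero : ∀ s : S, (0:ℝ) ∈ { r : ℝ |
      ∃ (𝒰 : Type) (_ : Fintype 𝒰) (W : 𝒳 → 𝒰 → ℝ),
      (∀ x u, 0 ≤ W x u) ∧ (∀ x, ∑ u, W x u = 1) ∧
      miPMF (fun p : 𝒰 × 𝒳 => W p.2 p.1 * PX p.2)
        - miPMF (fun p : 𝒰 × 𝒴 => ∑ x, W x p.1 * P s (x, p.2)) ≤ R ∧
      r = miPMF (fun p : 𝒰 × 𝒳 => W p.2 p.1 * PX p.2) } := by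
    intro s
    have e1 : (fun p : PUnit × 𝒳 => (fun (_ : 𝒳) (_ : PUnit) => (1:ℝ)) p.2 p.1 * PX p.2)
        = fun p : PUnit × 𝒳 => PX p.2 := by
      funext p; simp
    have e2 : (fun p : PUnit × 𝒴 => ∑ x, (fun (_ : 𝒳) (_ : PUnit) => (1:ℝ)) x p.1 * P s (x, p.2))
        = fun p : PUnit × 𝒴 => margSnd (P s) p.2 := by
      funext p; simp [margSnd]
    have hsum : ∑ y, margSnd (P s) y = 1 := by
      have h := Fintype.sum_prod_type_right (f := P s)
      rw [← (hP s).2, h]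
      rfl
    refine ⟨PUnit, inferInstance, fun _ _ => 1, fun _ _ => zero_le_one,
      fun x => by simp, ?_, ?_⟩
    · rw [e1, e2, miPMF_punit PX hPX.2, miPMF_punit (margSnd (P s)) hsum]
      linarith
    · rw [e1, miPMF_punit PX hPX.2]
  have hMle : ∀ s : S, Msup (P s') PX R ≤ Msup (P s) PX R := by
    intro s
    unfold Msup
    refine csSup_le_csSup (hbdd (P s)) ⟨0, hzero s'⟩ ?_
    rintro r ⟨𝒰, i, W, h0, h1, hcon, hr⟩
    refine ⟨𝒰, i, W, h0, h1, ?_, hr⟩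
    have := key 𝒰 i W h0 s
    linarith
  have hMB : MB P PX R = Msup (P s') PX R := by
    unfold MB
    exact le_antisymm (Finset.inf'_le _ (Finset.mem_univ s'))
      (Finset.le_inf' _ _ fun s _ => hMle s)
  rw [hsets, hMB]

end CRGen
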